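/- In GentleRain, if every PUT is assigned a timestamp strictly greater than the timestamp of every version the issuing client has previously seen (including reads-from), then timestamps respect causality: whenever version X causally depends on version Y, Y.t < X.t. -/

import Mathlib

/-- An event of a client session: reading or writing (creating) a version. -/
inductive CEv (ι : Type) where
  | read (v : ι)
  | write (v : ι)

/-- Versions a client has seen (read or written) in the first `n` events of its
session. -/
def seenVers {ι : Type} (sess : List (CEv ι)) (n : ℕ) : List ι :=
  (sess.take n).map (fun e => match e with | .read v => v | .write v => v)

/-- GentleRain timestamps respect causality.
Clients `c` execute sessions of read/write events on versions `ι` timestamped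
by `t`.  Protocol invariant: a PUT (write event) is assigned a timestamp
strictly greater than the timestamps of all versions the issuing client has
previously seen.  Direct causal dependency `ddep X Y` holds only when some
client created `X` after having seen `Y`; causal dependency is its transitive
closure.  Then timestamps respect causality: if `X` causally depends on `Y`
then `t Y < t X`. -/
theorem gentlerain_timestamps_respect_causality {C ι : Type}
    (sess : C → List (CEv ι)) (t : ι → ℕ)
    (hts : ∀ c n X, (sess c)[n]? = some (CEv.write X) →
      ∀ Y ∈ seenVers (sess c) n, t Y < t X)
    (ddep : ι → ι → Prop)
    (hdep : ∀ X Y, ddep X Y →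
      ∃ c n, (sess c)[n]? = some (CEv.write X) ∧ Y ∈ seenVers (sess c) n) :
    ∀ X Y, Relation.TransGen ddep X Y → t Y < t X := by
  intro X Y h
  induction h with
  | single h =>
    obtain ⟨c, n, hw, hY⟩ := hdep _ _ h
    exact hts c n _ hw _ hY
  | tail h hd ih =>
    obtain ⟨c, n, hw, hY⟩ := hdep _ _ hd
    exact lt_trans (hts c n _ hw _ hY) ih
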